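/- Let C be an n×n generalized Cartan matrix of finite Dynkin type (C invertible with all entries of C⁻¹ positive, C_{ii}=2, C_{ij} ≤ 0 for i≠j), b_i the i-th row sum of C⁻¹, and F a p-periodic positive integral frieze for C (satisfying the mesh relations). Then every entry satisfies F(i,k) ≤ 2^(p·b_i). -/

import Mathlib

open Finset in
/-- For a generalized Cartan matrix C of finite Dynkin type with bᵢ the row sums
of C⁻¹, every entry of a p-periodic positive integral frieze for C satisfies
F(i,k) ≤ 2^(p·bᵢ). -/
theorem stmt_11 {n : ℕ} (C : Matrix (Fin n) (Fin n) ℤ)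
    (hdiag : ∀ i, C i i = 2) (hoff : ∀ i j, i ≠ j → C i j ≤ 0)
    (hC : IsUnit (C.map (Int.cast : ℤ → ℝ)).det)
    (hinv : ∀ i j, 0 < (C.map (Int.cast : ℤ → ℝ))⁻¹ i j)
    (b : Fin n → ℝ) (hb : ∀ i, b i = ∑ j, (C.map (Int.cast : ℤ → ℝ))⁻¹ i j)
    (p : ℕ) (hp : 1 ≤ p) (F : Fin n × ℤ → ℤ)
    (hpos : ∀ i k, 1 ≤ F (i, k))
    (hper : ∀ i (k : ℤ), F (i, k + p) = F (i, k))
    (hmesh : ∀ i (k : ℤ), F (i, k) * F (i, k + 1) =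
      1 + (∏ j ∈ univ.filter (· < i), F (j, k) ^ (-C i j).toNat) *
          (∏ j ∈ univ.filter (i < ·), F (j, k + 1) ^ (-C i j).toNat)) :
    ∀ i (k : ℤ), (F (i, k) : ℝ) ≤ 2 ^ ((p : ℝ) * b i) := by
  classical
  set A := C.map (Int.cast : ℤ → ℝ) with hA
  have hF1 : ∀ i (k : ℤ), (1:ℝ) ≤ (F (i,k) : ℝ) := fun i k => by exact_mod_cast hpos i k
  have hF0 : ∀ i (k : ℤ), (0:ℝ) < (F (i,k) : ℝ) := fun i k => zero_lt_one.trans_le (hF1 i k)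
  set lf : Fin n → ℤ → ℝ := fun i k => Real.log (F (i,k)) with hlf
  have hlf0 : ∀ i k, 0 ≤ lf i k := fun i k => Real.log_nonneg (hF1 i k)
  set L : Fin n → ℝ := fun i => ∑ k ∈ range p, lf i (k : ℤ) with hLdef
  -- general periodicity
  have hperall : ∀ i (k m : ℤ), F (i, k + m * p) = F (i, k) := by
    intro i k m
    induction m using Int.induction_on with
    | zero => simp
    | succ m ih =>
        have h := hper i (k + m * p)
        rw [show k + ((m:ℤ)+1) * p = k + m*p + p by ring, h, ih]
    | pred m ih =>
        have h := hper i (k + (-(m:ℤ)-1) * p)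
        rw [show k + (-(m:ℤ)-1)*p + (p:ℤ) = k + (-(m:ℤ))*p by ring] at h
        exact h.symm.trans ih
  have hmod : ∀ i (k : ℤ), F (i,k) = F (i, k % p) := by
    intro i k
    have h := hperall i (k % p) (k / p)
    rw [← h]
    congr 1
    rw [Prod.mk.injEq]
    refine ⟨rfl, ?_⟩
    rw [Int.emod_add_ediv_mul k p]
  -- shift lemma
  have shift : ∀ j, ∑ k ∈ range p, lf j ((k:ℤ)+1) = L j := by
    intro j
    have h1 : ∑ k ∈ range (p+1), lf j (k:ℤ) = (∑ k ∈ range p, lf j ((k:ℤ)+1)) + lf j 0 := by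
      rw [Finset.sum_range_succ']
      push_cast
      rfl
    have h2 : ∑ k ∈ range (p+1), lf j (k:ℤ) = L j + lf j (p:ℤ) := by
      rw [Finset.sum_range_succ, hLdef]
    have h3 : lf j (p:ℤ) = lf j 0 := by
      have := hper j 0
      simp only [zero_add] at this
      simp [hlf, this]
    rw [h3] at h2
    linarith [h1.symm.trans h2]
  -- pointwise log inequality
  have hstep : ∀ i (k : ℤ), lf i k + lf i (k+1) ≤ Real.log 2
      + (∑ j ∈ univ.filter (· < i), ((-C i j).toNat : ℝ) * lf j k)
      + (∑ j ∈ univ.filter (i < ·), ((-C i j).toNat : ℝ) * lf j (k+1)) := by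
    intro i k
    set P1 : ℝ := ∏ j ∈ univ.filter (· < i), (F (j,k) : ℝ) ^ (-C i j).toNat with hP1def
    set P2 : ℝ := ∏ j ∈ univ.filter (i < ·), (F (j,k+1) : ℝ) ^ (-C i j).toNat with hP2def
    have hmR : (F (i,k):ℝ) * (F (i,k+1):ℝ) = 1 + P1 * P2 := by
      have := hmesh i k
      have := congrArg (Int.cast : ℤ → ℝ) this
      push_cast at this
      simpa [hP1def, hP2def] using this
    have hP1 : 1 ≤ P1 := by
      rw [hP1def]
      simpa using Finset.prod_le_prod (f := fun _ => (1:ℝ))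
        (fun j _ => zero_le_one) (fun j _ => one_le_pow₀ (hF1 j k))
    have hP2 : 1 ≤ P2 := by
      rw [hP2def]
      simpa using Finset.prod_le_prod (f := fun _ => (1:ℝ))
        (fun j _ => zero_le_one) (fun j _ => one_le_pow₀ (hF1 j (k+1)))
    have hle : (F (i,k):ℝ) * (F (i,k+1):ℝ) ≤ 2 * (P1 * P2) := by
      rw [hmR]; nlinarith
    have hP1pos : (0:ℝ) < P1 := zero_lt_one.trans_le hP1
    have hP2pos : (0:ℝ) < P2 := zero_lt_one.trans_le hP2
    have hlog := Real.log_le_log (mul_pos (hF0 i k) (hF0 i (k+1))) hle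
    rw [Real.log_mul (hF0 i k).ne' (hF0 i (k+1)).ne',
        Real.log_mul (by norm_num) (mul_pos hP1pos hP2pos).ne',
        Real.log_mul hP1pos.ne' hP2pos.ne'] at hlog
    have e1 : Real.log P1 = ∑ j ∈ univ.filter (· < i), ((-C i j).toNat : ℝ) * lf j k := by
      rw [hP1def, Real.log_prod (fun j _ => pow_ne_zero _ (hF0 j k).ne')]
      exact Finset.sum_congr rfl fun j _ => by rw [Real.log_pow]
    have e2 : Real.log P2 = ∑ j ∈ univ.filter (i < ·), ((-C i j).toNat : ℝ) * lf j (k+1) := by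
      rw [hP2def, Real.log_prod (fun j _ => pow_ne_zero _ (hF0 j (k+1)).ne')]
      exact Finset.sum_congr rfl fun j _ => by rw [Real.log_pow]
    rw [e1, e2] at hlog
    simpa [hlf, add_assoc] using hlog
  -- summed inequality
  have sumineq : ∀ i, 2 * L i ≤ (p : ℝ) * Real.log 2
      + (∑ j ∈ univ.filter (· < i), ((-C i j).toNat : ℝ) * L j)
      + (∑ j ∈ univ.filter (i < ·), ((-C i j).toNat : ℝ) * L j) := by
    intro i
    have h := Finset.sum_le_sum (fun k (_ : k ∈ range p) => hstep i (k:ℤ))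
    have lhs_eq : ∑ k ∈ range p, (lf i (k:ℤ) + lf i ((k:ℤ)+1)) = 2 * L i := by
      rw [Finset.sum_add_distrib, shift i]
      rw [hLdef]; ring
    have rhs_eq : ∑ k ∈ range p, (Real.log 2
        + (∑ j ∈ univ.filter (· < i), ((-C i j).toNat : ℝ) * lf j (k:ℤ))
        + (∑ j ∈ univ.filter (i < ·), ((-C i j).toNat : ℝ) * lf j ((k:ℤ)+1)))
        = (p : ℝ) * Real.log 2
        + (∑ j ∈ univ.filter (· < i), ((-C i j).toNat : ℝ) * L j)
        + (∑ j ∈ univ.filter (i < ·), ((-C i j).toNat : ℝ) * L j) := by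
      rw [Finset.sum_add_distrib, Finset.sum_add_distrib, Finset.sum_const, card_range,
          nsmul_eq_mul]
      congr 1
      · congr 1
        rw [Finset.sum_comm]
        exact Finset.sum_congr rfl fun j _ => by rw [← Finset.mul_sum, hLdef]
      · rw [Finset.sum_comm]
        exact Finset.sum_congr rfl fun j _ => by rw [← Finset.mul_sum, shift j]
    rw [lhs_eq, rhs_eq] at h
    exact h
  -- key: (A.mulVec L) i ≤ p log 2
  have key : ∀ i, ∑ j, (C i j : ℝ) * L j ≤ (p : ℝ) * Real.log 2 := by
    intro i
    have hsplit : ∑ j, (C i j : ℝ) * L j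
        = 2 * L i + ∑ j ∈ univ.erase i, (C i j : ℝ) * L j := by
      rw [← Finset.add_sum_erase _ _ (mem_univ i), hdiag i]
      push_cast; ring_nf
    have herase : (univ.erase i : Finset (Fin n))
        = univ.filter (· < i) ∪ univ.filter (i < ·) := by
      ext j
      simp only [Finset.mem_erase, Finset.mem_union, Finset.mem_filter, Finset.mem_univ,
        true_and, and_true]
      exact ne_iff_lt_or_gt
    have hdisj : Disjoint (univ.filter (· < i) : Finset (Fin n)) (univ.filter (i < ·)) := by
      rw [Finset.disjoint_left]
      intro j h1 h2
      simp only [mem_filter] at h1 h2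
      exact absurd h2.2 (not_lt_of_gt h1.2)
    have hneg : ∀ j ∈ univ.erase i, (C i j : ℝ) * L j = -(((-C i j).toNat : ℝ) * L j) := by
      intro j hj
      have hji : j ≠ i := (Finset.mem_erase.mp hj).1
      have : ((-C i j).toNat : ℤ) = -C i j :=
        Int.toNat_of_nonneg (neg_nonneg.mpr (hoff i j hji.symm))
      have : ((-C i j).toNat : ℝ) = -(C i j : ℝ) := by exact_mod_cast this
      rw [this]; ring
    have hsum2 : ∑ j ∈ univ.erase i, (C i j : ℝ) * L j
        = -((∑ j ∈ univ.filter (· < i), ((-C i j).toNat : ℝ) * L j)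
            + (∑ j ∈ univ.filter (i < ·), ((-C i j).toNat : ℝ) * L j)) := by
      rw [Finset.sum_congr rfl hneg, Finset.sum_neg_distrib, herase,
          Finset.sum_union hdisj]
    rw [hsplit, hsum2]
    linarith [sumineq i]
  have hmul : ∀ j, A.mulVec L j ≤ (p:ℝ) * Real.log 2 := by
    intro j
    have := key j
    have he : A.mulVec L j = ∑ x, (C j x : ℝ) * L x := by
      rw [hA]
      simp [Matrix.mulVec, dotProduct, Matrix.map_apply]
    rw [he]
    exact this
  have hLrec : L = A⁻¹.mulVec (A.mulVec L) := by
    rw [Matrix.mulVec_mulVec, Matrix.nonsing_inv_mul _ hC, Matrix.one_mulVec]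
  have hLb : ∀ i, L i ≤ (p:ℝ) * Real.log 2 * b i := by
    intro i
    have hLi : L i = ∑ j, A⁻¹ i j * A.mulVec L j := by
      conv_lhs => rw [hLrec]
      simp [Matrix.mulVec, dotProduct]
    rw [hLi, hb]
    calc ∑ j, A⁻¹ i j * A.mulVec L j
        ≤ ∑ j, A⁻¹ i j * ((p:ℝ) * Real.log 2) :=
          Finset.sum_le_sum fun j _ => mul_le_mul_of_nonneg_left (hmul j) (hinv i j).le
      _ = (p:ℝ) * Real.log 2 * ∑ j, A⁻¹ i j := by rw [← Finset.sum_mul]; ring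
  -- conclude
  intro i k
  have hr0 : 0 ≤ k % p := Int.emod_nonneg k (by exact_mod_cast Nat.one_le_iff_ne_zero.mp hp)
  have hrp : k % p < p := Int.emod_lt_of_pos k (by exact_mod_cast hp)
  set r : ℕ := (k % p).toNat with hrdef
  have hrcast : (r : ℤ) = k % p := Int.toNat_of_nonneg hr0
  have hrlt : r ∈ range p := by
    rw [mem_range]
    omega
  have hFk : F (i, k) = F (i, (r:ℤ)) := by rw [hrcast]; exact hmod i k
  have h1 : lf i k ≤ L i := by
    have heq : lf i k = lf i (r:ℤ) := by simp only [hlf]; rw [hFk]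
    calc lf i k = lf i (r:ℤ) := heq
      _ ≤ ∑ m ∈ range p, lf i (m:ℤ) :=
          Finset.single_le_sum (f := fun m : ℕ => lf i (m:ℤ)) (fun m _ => hlf0 i (m:ℤ)) hrlt
      _ = L i := rfl
  have h2 : (F (i,k):ℝ) = Real.exp (lf i k) := (Real.exp_log (hF0 i k)).symm
  rw [h2, Real.rpow_def_of_pos (by norm_num : (0:ℝ) < 2)]
  apply Real.exp_le_exp.mpr
  calc lf i k ≤ L i := h1
    _ ≤ (p:ℝ) * Real.log 2 * b i := hLb i
    _ = Real.log 2 * ((p:ℝ) * b i) := by ring
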